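/- Let m ≥ 3 and n ∈ ℕ. Then n · p'_m(n) = ∑_{k=1}^{n} σ'_m(k) · p'_m(n - k), where p'_m(n) counts partitions of n into parts ≡ 0, 1, or m-1 (mod m) and σ'_m(k) is the sum of divisors of k that are ≡ 0, 1, or m-1 (mod m). -/

import Mathlib

/-- Number of partitions of `n` all of whose parts satisfy `P`. -/
def restrictedPartitionCount (P : ℕ → Prop) [DecidablePred P] (n : ℕ) : ℕ :=
  Fintype.card {p : Nat.Partition n // ∀ i ∈ p.parts, P i}

/-- `p'_m(n)`: the number of partitions of `n` into parts ≡ 0, 1, or m-1 (mod m). -/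
def pm (m n : ℕ) : ℕ :=
  restrictedPartitionCount (fun i => i % m = 0 ∨ i % m = 1 ∨ i % m = m - 1) n

/-- `σ'_m(n)`: the sum of divisors of `n` congruent to 0, 1, or m-1 (mod m). -/
def sigma' (m n : ℕ) : ℕ :=
  ∑ d ∈ n.divisors, if d % m = 0 ∨ d % m = 1 ∨ d % m = m - 1 then d else 0

open Finset

variable {P : ℕ → Prop} [DecidablePred P]

def partsA (P : ℕ → Prop) [DecidablePred P] (n : ℕ) : Finset (Nat.Partition n) :=
  Finset.univ.filter (fun p => ∀ i ∈ p.parts, P i)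

lemma mem_partsA {n : ℕ} {p : Nat.Partition n} :
    p ∈ partsA P n ↔ ∀ i ∈ p.parts, P i := by simp [partsA]

lemma restricted_eq_card (n : ℕ) :
    Fintype.card {p : Nat.Partition n // ∀ i ∈ p.parts, P i} = (partsA P n).card := by
  rw [Fintype.card_subtype]; rfl

lemma card_slice (d j n : ℕ) (hPd : P d) (hd : 1 ≤ d) (hjn : d * j ≤ n) :
    ((partsA P n).filter (fun p => j ≤ p.parts.count d)).card = (partsA P (n - d * j)).card := by
  refine Finset.card_bij'
    (fun p hp =>
      { parts := p.parts - Multiset.replicate j d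
        parts_pos := fun {i} hi =>
          p.parts_pos (Multiset.mem_of_le (Multiset.sub_le_self _ _) hi)
        parts_sum := by
          simp only [Finset.mem_filter] at hp
          have hle : Multiset.replicate j d ≤ p.parts :=
            Multiset.le_count_iff_replicate_le.1 hp.2
          have h2 := congrArg Multiset.sum (tsub_add_cancel_of_le hle)
          rw [Multiset.sum_add, Multiset.sum_replicate, smul_eq_mul, p.parts_sum,
            mul_comm j d] at h2
          omega })
    (fun q hq =>
      { parts := q.parts + Multiset.replicate j d
        parts_pos := fun {i} hi => by
          rcases Multiset.mem_add.1 hi with h | h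
          · exact q.parts_pos h
          · rw [Multiset.eq_of_mem_replicate h]; omega
        parts_sum := by
          rw [Multiset.sum_add, Multiset.sum_replicate, smul_eq_mul, q.parts_sum,
            mul_comm j d]
          omega })
    ?_ ?_ ?_ ?_
  · intro p hp
    simp only [Finset.mem_filter, mem_partsA] at hp
    rw [mem_partsA]
    intro i hi
    exact hp.1 i (Multiset.mem_of_le (Multiset.sub_le_self _ _) hi)
  · intro q hq
    rw [mem_partsA] at hq
    simp only [Finset.mem_filter, mem_partsA]
    refine ⟨?_, ?_⟩
    · intro i hi
      rcases Multiset.mem_add.1 hi with h | h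
      · exact hq i h
      · rwa [Multiset.eq_of_mem_replicate h]
    · rw [Multiset.count_add, Multiset.count_replicate_self]; omega
  · intro p hp
    simp only [Finset.mem_filter] at hp
    have hle : Multiset.replicate j d ≤ p.parts :=
      Multiset.le_count_iff_replicate_le.1 hp.2
    exact Nat.Partition.ext (tsub_add_cancel_of_le hle)
  · intro q hq
    exact Nat.Partition.ext (add_tsub_cancel_right _ _)

lemma count_mul_le (d n : ℕ) (p : Nat.Partition n) : d * p.parts.count d ≤ n := by
  have hle : Multiset.replicate (p.parts.count d) d ≤ p.parts :=
    Multiset.le_count_iff_replicate_le.1 le_rfl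
  have h2 := congrArg Multiset.sum (tsub_add_cancel_of_le hle)
  rw [Multiset.sum_add, Multiset.sum_replicate, smul_eq_mul, p.parts_sum, mul_comm] at h2
  omega

lemma sum_count_eq (d n : ℕ) (hPd : P d) (hd : 1 ≤ d) :
    ∑ p ∈ partsA P n, p.parts.count d =
      ∑ j ∈ (Icc 1 n).filter (fun j => d * j ≤ n), (partsA P (n - d * j)).card := by
  have key : ∀ p ∈ partsA P n,
      p.parts.count d = ∑ j ∈ Icc 1 n, if j ≤ p.parts.count d then 1 else 0 := by
    intro p _
    have hc : p.parts.count d ≤ n := by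
      have := count_mul_le d n p
      nlinarith
    rw [← Finset.card_filter]
    have : (Icc 1 n).filter (fun j => j ≤ p.parts.count d) = Icc 1 (p.parts.count d) := by
      ext j; simp only [mem_filter, mem_Icc]; omega
    rw [this, Nat.card_Icc]
    omega
  rw [Finset.sum_congr rfl key, Finset.sum_comm, Finset.sum_filter]
  refine Finset.sum_congr rfl ?_
  intro j hj
  rw [mem_Icc] at hj
  rw [← Finset.card_filter]
  by_cases h : d * j ≤ n
  · rw [if_pos h, card_slice d j n hPd hd h]
  · rw [if_neg h]
    rw [Finset.card_eq_zero, Finset.filter_eq_empty_iff]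
    intro p _
    intro hle
    have := count_mul_le d n p
    have : d * j ≤ d * p.parts.count d := Nat.mul_le_mul_left d hle
    omega

lemma parts_sum_expand (n : ℕ) (p : Nat.Partition n) :
    n = ∑ d ∈ Icc 1 n, d * p.parts.count d := by
  have h0 : p.parts.sum = ∑ a ∈ p.parts.toFinset, p.parts.count a • a := by
    conv_lhs => rw [← Multiset.map_id p.parts]
    exact Finset.sum_multiset_map_count p.parts id
  have hsub : p.parts.toFinset ⊆ Icc 1 n := by
    intro a ha
    rw [Multiset.mem_toFinset] at ha
    rw [mem_Icc]
    refine ⟨p.parts_pos ha, ?_⟩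
    calc a ≤ p.parts.sum := Multiset.single_le_sum (fun x _ => Nat.zero_le x) a ha
    _ = n := p.parts_sum
  calc n = p.parts.sum := p.parts_sum.symm
  _ = ∑ a ∈ p.parts.toFinset, p.parts.count a • a := h0
  _ = ∑ a ∈ Icc 1 n, p.parts.count a • a := by
      refine Finset.sum_subset hsub ?_
      intro x _ hx
      rw [Multiset.count_eq_zero_of_notMem (fun h => hx (Multiset.mem_toFinset.2 h)), zero_smul]
  _ = ∑ d ∈ Icc 1 n, d * p.parts.count d := by
      exact Finset.sum_congr rfl (fun d _ => by rw [smul_eq_mul, mul_comm])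

lemma rhs_reindex (n : ℕ) :
    ∑ k ∈ Icc 1 n, (∑ e ∈ k.divisors, if P e then e else 0) * (partsA P (n - k)).card =
      ∑ d ∈ Icc 1 n, ∑ j ∈ (Icc 1 n).filter (fun j => d * j ≤ n),
        (if P d then d else 0) * (partsA P (n - d * j)).card := by
  have h1 : ∀ k, (∑ e ∈ k.divisors, if P e then e else 0) * (partsA P (n - k)).card
      = ∑ x ∈ k.divisorsAntidiagonal, (if P x.1 then x.1 else 0) * (partsA P (n - x.1 * x.2)).card := by
    intro k
    rw [Finset.sum_mul]
    have h2 : ∑ e ∈ k.divisors, (if P e then e else 0) * (partsA P (n - k)).card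
        = ∑ e ∈ k.divisors, (if P e then e else 0) * (partsA P (n - e * (k / e))).card := by
      refine Finset.sum_congr rfl ?_
      intro e he
      rw [Nat.mul_div_cancel' (Nat.mem_divisors.1 he).1]
    rw [h2, ← Nat.sum_divisorsAntidiagonal
      (fun d e => (if P d then d else 0) * (partsA P (n - d * e)).card)]
  simp_rw [h1]
  rw [Finset.sum_sigma', Finset.sum_sigma']
  refine Finset.sum_nbij' (fun x => ⟨x.2.1, x.2.2⟩) (fun y => ⟨y.1 * y.2, (y.1, y.2)⟩) ?_ ?_ ?_ ?_ ?_
  · rintro ⟨k, d, i⟩ hx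
    simp only [Finset.mem_sigma, mem_Icc, Nat.mem_divisorsAntidiagonal, mem_filter] at hx ⊢
    obtain ⟨⟨hk1, hk2⟩, hdi, hk0⟩ := hx
    have hd : 1 ≤ d := Nat.pos_of_ne_zero (fun h => by subst h; simp at hdi; omega)
    have hi : 1 ≤ i := Nat.pos_of_ne_zero (fun h => by subst h; simp at hdi; omega)
    refine ⟨⟨hd, ?_⟩, ⟨hi, ?_⟩, ?_⟩ <;> nlinarith
  · rintro ⟨d, i⟩ hy
    simp only [Finset.mem_sigma, mem_Icc, Nat.mem_divisorsAntidiagonal, mem_filter] at hy ⊢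
    obtain ⟨⟨hd1, _⟩, ⟨hi1, _⟩, hle⟩ := hy
    have hpos : 0 < d * i := Nat.mul_pos hd1 hi1
    exact ⟨⟨hpos, hle⟩, trivial, Nat.pos_iff_ne_zero.1 hpos⟩
  · rintro ⟨k, d, i⟩ hx
    simp only [Finset.mem_sigma, Nat.mem_divisorsAntidiagonal] at hx
    simp [hx.2.1]
  · rintro ⟨d, i⟩ _
    rfl
  · rintro ⟨k, d, i⟩ hx
    simp only [Finset.mem_sigma, Nat.mem_divisorsAntidiagonal] at hx
    simp [hx.2.1]

lemma main_general (n : ℕ) :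
    n * (partsA P n).card =
      ∑ k ∈ Icc 1 n, (∑ e ∈ k.divisors, if P e then e else 0) * (partsA P (n - k)).card := by
  rw [rhs_reindex]
  calc n * (partsA P n).card = ∑ p ∈ partsA P n, n := by
        rw [Finset.sum_const, smul_eq_mul, mul_comm]
  _ = ∑ p ∈ partsA P n, ∑ d ∈ Icc 1 n, d * p.parts.count d :=
        Finset.sum_congr rfl (fun p _ => parts_sum_expand n p)
  _ = ∑ d ∈ Icc 1 n, ∑ p ∈ partsA P n, d * p.parts.count d := Finset.sum_comm
  _ = ∑ d ∈ Icc 1 n, ∑ j ∈ (Icc 1 n).filter (fun j => d * j ≤ n),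
        (if P d then d else 0) * (partsA P (n - d * j)).card := by
      refine Finset.sum_congr rfl ?_
      intro d hd
      rw [mem_Icc] at hd
      by_cases hPd : P d
      · rw [← Finset.mul_sum, sum_count_eq d n hPd hd.1, Finset.mul_sum]
        simp [hPd]
      · have hz : ∀ p ∈ partsA P n, d * p.parts.count d = 0 := by
          intro p hp
          rw [mem_partsA] at hp
          rw [Multiset.count_eq_zero_of_notMem (fun h => hPd (hp d h)), mul_zero]
        rw [Finset.sum_congr rfl hz]
        simp [hPd]

theorem euler_convolution_restricted (m : ℕ) (hm : 3 ≤ m) (n : ℕ) (hn : 1 ≤ n) :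
    n * pm m n = ∑ k ∈ Finset.Icc 1 n, sigma' m k * pm m (n - k) := by
  have h := main_general (P := fun i => i % m = 0 ∨ i % m = 1 ∨ i % m = m - 1) n
  simp only [pm, restrictedPartitionCount, sigma', restricted_eq_card]
  exact h
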